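/- Under the SUPER-ADAM (τ = 0) setting on a compact convex set X ⊆ ℝ^d — f(x) = E_{ξ∼D}[f(x;ξ)] differentiable and L-smooth, unbiased stochastic gradients with variance ≤ σ², f bounded below by f*; k > 0, m ≥ k², μ_t = k/(m+t)^{1/2}, α_{t+1} = c μ_t, 0 < γ ≤ ρ m^{1/2}/(8 L k), 8 L γ/ρ ≤ c ≤ m^{1/2}/k; x_1 ∈ X, g_1 = ∇f(x_1;ξ_1); H_t ⪰ ρ I_d symmetric, x̃_{t+1} = argmin_{x∈X}{⟨g_t, x⟩ + (1/(2γ))(x − x_t)ᵀH_t(x − x_t)}, x_{t+1} = (1 − μ_t)x_t + μ_t x̃_{t+1}, ξ_{t+1} ∼ D independent of the past, g_{t+1} = (1 − α_{t+1})g_t + α_{t+1}∇f(x_{t+1};ξ_{t+1}) — it holds for every T ≥ 1 that (1/T) Σ_{t=1}^T E[ (1/(4ρ²)) ‖∇f(x_t) − g_t‖² + (1/(4γ²)) ‖x̃_{t+1} − x_t‖² ] ≤ M (m+T)^{1/2} / T, where M = (f(x_1) − f*)/(ρ γ k) + 2σ²/(ρ γ k L) + 2 m σ² ln(m+T)/(ρ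 γ k L). -/

import Mathlib

open scoped RealInnerProductSpace
open MeasureTheory ProbabilityTheory

theorem descent_lemma' {E : Type*} [NormedAddCommGroup E] [InnerProductSpace ℝ E] [CompleteSpace E]
    {f : E → ℝ} {gf : E → E} {L : ℝ}
    (hgf : ∀ x, HasGradientAt f (gf x) x)
    (hsmooth : ∀ x y : E, ‖gf x - gf y‖ ≤ L * ‖x - y‖) (x y : E) :
    f y ≤ f x + ⟪gf x, y - x⟫ + L / 2 * ‖y - x‖ ^ 2 := by
  set v := y - x with hv
  set ψ : ℝ → ℝ := fun s => f (x + s • v) - s * ⟪gf x, v⟫ - s ^ 2 * (L / 2 * ‖v‖ ^ 2) with hψ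
  have hline : ∀ s : ℝ, HasDerivAt (fun s : ℝ => x + s • v) v s := by
    intro s
    simpa using ((hasDerivAt_id s).smul_const v).const_add x
  have hd : ∀ s : ℝ, HasDerivAt ψ (⟪gf (x + s • v), v⟫ - ⟪gf x, v⟫ - 2 * s * (L / 2 * ‖v‖ ^ 2)) s := by
    intro s
    have h1 : HasDerivAt (fun s : ℝ => f (x + s • v)) ⟪gf (x + s • v), v⟫ s := by
      have := ((hgf (x + s • v)).hasFDerivAt).comp_hasDerivAt s (hline s)
      simpa [InnerProductSpace.toDual_apply_apply, Function.comp_def] using this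
    have h2 : HasDerivAt (fun s : ℝ => s * ⟪gf x, v⟫) ⟪gf x, v⟫ s := by
      simpa using (hasDerivAt_id s).mul_const (⟪gf x, v⟫)
    have h3 : HasDerivAt (fun s : ℝ => s ^ 2 * (L / 2 * ‖v‖ ^ 2)) (2 * s * (L / 2 * ‖v‖ ^ 2)) s := by
      simpa using ((hasDerivAt_pow 2 s)).mul_const (L / 2 * ‖v‖ ^ 2)
    exact (h1.sub h2).sub h3
  have hkey : ψ 1 ≤ ψ 0 := by
    have : AntitoneOn ψ (Set.Icc 0 1) := by
      apply antitoneOn_of_hasDerivWithinAt_nonpos (convex_Icc 0 1)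
        (fun s hs => (hd s).continuousAt.continuousWithinAt)
        (fun s hs => (hd s).hasDerivWithinAt)
      intro s hs
      rw [interior_Icc] at hs
      have hss : ⟪gf (x + s • v) - gf x, v⟫ ≤ L * s * ‖v‖ ^ 2 := by
        calc ⟪gf (x + s • v) - gf x, v⟫ ≤ ‖gf (x + s • v) - gf x‖ * ‖v‖ := real_inner_le_norm _ _
          _ ≤ (L * ‖(x + s • v) - x‖) * ‖v‖ := by
              gcongr; exact hsmooth _ _
          _ = L * (|s| * ‖v‖) * ‖v‖ := by rw [add_sub_cancel_left, norm_smul, Real.norm_eq_abs]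
          _ = L * s * ‖v‖ ^ 2 := by rw [abs_of_pos hs.1]; ring
      have : ⟪gf (x + s • v), v⟫ - ⟪gf x, v⟫ = ⟪gf (x + s • v) - gf x, v⟫ := by
        rw [inner_sub_left]
      rw [this]
      nlinarith [hss]
    exact this (by norm_num) (by norm_num) (by norm_num)
  simp only [hψ] at hkey
  simp only [one_smul, zero_smul, add_zero, one_pow, one_mul, zero_pow, zero_mul, sub_zero] at hkey
  have : x + v = y := by rw [hv]; abel
  rw [this] at hkey
  linarith

theorem vi_step {E : Type*} [NormedAddCommGroup E] [InnerProductSpace ℝ E]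
    {X : Set E} (hX : Convex ℝ X) {γ : ℝ} (hγ : 0 < γ) (A : E →L[ℝ] E)
    (hA : ∀ v : E, 0 ≤ ⟪A v, v⟫) {g xt xt' : E} (hxt : xt ∈ X) (hxt' : xt' ∈ X)
    (hmin : ∀ y ∈ X, ⟪g, xt'⟫ + (1/(2*γ)) * ⟪A (xt' - xt), xt' - xt⟫
      ≤ ⟪g, y⟫ + (1/(2*γ)) * ⟪A (y - xt), y - xt⟫) :
    ⟪g, xt' - xt⟫ ≤ -(1/γ) * ⟪A (xt' - xt), xt' - xt⟫ := by
  set u := xt' - xt with hu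
  set Q := ⟪A u, u⟫ with hQ
  have hQ0 : 0 ≤ Q := hA u
  have key : ∀ s : ℝ, 0 < s → s ≤ 1 → ⟪g, u⟫ + (1/γ) * Q ≤ s / (2*γ) * Q := by
    intro s hs0 hs1
    have hyX : xt + (1 - s) • u ∈ X := by
      have := hX hxt hxt' (by linarith : (0:ℝ) ≤ s) (by linarith : (0:ℝ) ≤ 1 - s) (by ring)
      have heq : s • xt + (1 - s) • xt' = xt + (1 - s) • u := by
        rw [hu]; module
      rwa [heq] at this
    have h := hmin _ hyX
    have h1 : (xt + (1 - s) • u) - xt = (1 - s) • u := by abel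
    rw [h1] at h
    have h2 : ⟪A ((1 - s) • u), (1 - s) • u⟫ = (1 - s) ^ 2 * Q := by
      rw [_root_.map_smul, real_inner_smul_left, real_inner_smul_right, hQ]; ring
    rw [h2] at h
    have h3 : ⟪g, xt + (1 - s) • u⟫ = ⟪g, xt⟫ + (1 - s) * ⟪g, u⟫ := by
      rw [inner_add_right, real_inner_smul_right]
    rw [h3] at h
    have h4 : ⟪g, xt'⟫ = ⟪g, xt⟫ + ⟪g, u⟫ := by
      rw [← inner_add_right, hu]; congr 1; abel
    rw [h4] at h
    set G := (⟪g, u⟫ : ℝ) with hG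
    have hy : (0:ℝ) ≤ 1/(2*γ) * Q := by positivity
    have key2 : s * G ≤ s * ((s - 2) * (1/(2*γ) * Q)) := by nlinarith [h]
    have key3 : G ≤ (s - 2) * (1/(2*γ) * Q) := le_of_mul_le_mul_left key2 hs0
    have e1 : G + 1/γ * Q = G + 2 * (1/(2*γ) * Q) := by field_simp
    rw [e1]
    have e2 : s/(2*γ) * Q = s * (1/(2*γ) * Q) := by ring
    rw [e2]
    nlinarith [key3]
  have : ⟪g, u⟫ + (1/γ) * Q ≤ 0 := by
    apply le_of_forall_pos_le_add
    intro ε hε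
    have hs0 : 0 < min 1 (2 * γ * ε / (Q + 1)) := by positivity
    have hs1 : min 1 (2 * γ * ε / (Q + 1)) ≤ 1 := min_le_left _ _
    calc ⟪g, u⟫ + (1/γ) * Q ≤ (min 1 (2 * γ * ε / (Q + 1))) / (2*γ) * Q := key _ hs0 hs1
      _ ≤ (2 * γ * ε / (Q + 1)) / (2*γ) * Q := by
          gcongr
          all_goals first | exact hQ0 | exact min_le_right _ _ | positivity
      _ = ε * (Q / (Q + 1)) := by field_simp
      _ ≤ ε * 1 := by
          gcongr
          rw [div_le_one (by linarith)]; linarith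
      _ = 0 + ε := by ring
  linarith

set_option maxHeartbeats 1000000 in
theorem recursion_core {d : ℕ} {Ω : Type*} [MeasurableSpace Ω] (P : Measure Ω)
    [IsProbabilityMeasure P] {Ξ : Type*} [MeasurableSpace Ξ] (D : Measure Ξ)
    [IsProbabilityMeasure D]
    (gS : Ξ → EuclideanSpace ℝ (Fin d) → EuclideanSpace ℝ (Fin d))
    (hgSmeas : Measurable (Function.uncurry gS))
    (gf : EuclideanSpace ℝ (Fin d) → EuclideanSpace ℝ (Fin d)) (hgfc : Continuous gf)
    {σ : ℝ}
    (hunbiased : ∀ x, ∫ s, gS s x ∂D = gf x)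
    (hvar : ∀ x, ∫ s, ‖gS s x - gf x‖ ^ 2 ∂D ≤ σ ^ 2)
    (W : Ω → (EuclideanSpace ℝ (Fin d)) × (EuclideanSpace ℝ (Fin d)) × (EuclideanSpace ℝ (Fin d)))
    (hW : Measurable W) (ξ' : Ω → Ξ) (hξ' : Measurable ξ')
    (hind : IndepFun W ξ' P) (hlawW : Measure.map ξ' P = D)
    {a μt : ℝ} (ha0 : 0 < a)
    (xn gn : Ω → EuclideanSpace ℝ (Fin d))
    (hxn : ∀ ω, xn ω = (1 - μt) • (W ω).1 + μt • (W ω).2.1)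
    (hgn : ∀ ω, gn ω = (1 - a) • (W ω).2.2 + a • gS (ξ' ω) (xn ω))
    (hint_next : Integrable (fun ω => ‖gf (xn ω) - gn ω‖ ^ 2) P)
    (hint_psi : Integrable (fun ω => ‖gf (xn ω) - (W ω).2.2‖ ^ 2) P) :
    ∫ ω, ‖gf (xn ω) - gn ω‖ ^ 2 ∂P
      ≤ (1 - a) ^ 2 * ∫ ω, ‖gf (xn ω) - (W ω).2.2‖ ^ 2 ∂P + a ^ 2 * σ ^ 2 := by
  set φ : (EuclideanSpace ℝ (Fin d)) × (EuclideanSpace ℝ (Fin d)) × (EuclideanSpace ℝ (Fin d))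
      → EuclideanSpace ℝ (Fin d) := fun w => (1 - μt) • w.1 + μt • w.2.1 with hφdef
  set ψ : (EuclideanSpace ℝ (Fin d)) × (EuclideanSpace ℝ (Fin d)) × (EuclideanSpace ℝ (Fin d))
      → EuclideanSpace ℝ (Fin d) := fun w => gf (φ w) - w.2.2 with hψdef
  have hφc : Continuous φ := by
    simp only [hφdef]; fun_prop
  have hψc : Continuous ψ := by
    simp only [hψdef]; fun_prop
  set F : ((EuclideanSpace ℝ (Fin d)) × (EuclideanSpace ℝ (Fin d)) × (EuclideanSpace ℝ (Fin d))) × Ξ → ℝ :=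
    fun p => ‖(1 - a) • ψ p.1 + a • (gf (φ p.1) - gS p.2 (φ p.1))‖ ^ 2 with hFdef
  have hgS2meas : Measurable (fun p : ((EuclideanSpace ℝ (Fin d)) × (EuclideanSpace ℝ (Fin d)) × (EuclideanSpace ℝ (Fin d))) × Ξ
      => gS p.2 (φ p.1)) := by
    have h1 : Measurable (fun p : ((EuclideanSpace ℝ (Fin d)) × (EuclideanSpace ℝ (Fin d)) × (EuclideanSpace ℝ (Fin d))) × Ξ
        => (p.2, φ p.1)) := measurable_snd.prodMk (hφc.measurable.comp measurable_fst)
    exact hgSmeas.comp h1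
  have hFmeas : Measurable F := by
    apply Measurable.pow_const
    apply Measurable.norm
    exact ((hψc.measurable.comp measurable_fst).const_smul (1 - a)).add
      ((((hgfc.comp hφc).measurable.comp measurable_fst).sub hgS2meas).const_smul a)
  have hpairmeas : Measurable (fun ω => (W ω, ξ' ω)) := hW.prodMk hξ'
  have hmap : Measure.map (fun ω => (W ω, ξ' ω)) P = (Measure.map W P).prod D := by
    rw [← hlawW]
    exact (indepFun_iff_map_prod_eq_prod_map_map hW.aemeasurable hξ'.aemeasurable).mp hind
  have hFW : ∀ ω, F (W ω, ξ' ω) = ‖gf (xn ω) - gn ω‖ ^ 2 := by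
    intro ω
    have hx : xn ω = φ (W ω) := hxn ω
    have hvec : gf (xn ω) - gn ω
        = (1 - a) • ψ (W ω) + a • (gf (φ (W ω)) - gS (ξ' ω) (φ (W ω))) := by
      rw [hgn ω]
      simp only [hψdef]
      rw [← hx]
      module
    simp only [hFdef]
    rw [← hvec]
  have hψW : ∀ ω, ‖ψ (W ω)‖ ^ 2 = ‖gf (xn ω) - (W ω).2.2‖ ^ 2 := by
    intro ω
    have hx : xn ω = φ (W ω) := hxn ω
    simp only [hψdef]
    rw [← hx]
  have hψmeas2 : Measurable (fun w => ‖ψ w‖ ^ 2) := hψc.norm.measurable.pow_const 2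
  have hFcomp : (F ∘ fun ω => (W ω, ξ' ω)) = fun ω => ‖gf (xn ω) - gn ω‖ ^ 2 := by
    funext ω; exact hFW ω
  have hFint : Integrable F ((Measure.map W P).prod D) := by
    rw [← hmap]
    rw [integrable_map_measure hFmeas.aestronglyMeasurable hpairmeas.aemeasurable]
    rw [hFcomp]; exact hint_next
  have hψWint : Integrable (fun w => ‖ψ w‖ ^ 2) (Measure.map W P) := by
    rw [integrable_map_measure hψmeas2.aestronglyMeasurable hW.aemeasurable]
    have heq : ((fun w => ‖ψ w‖ ^ 2) ∘ W) = fun ω => ‖gf (xn ω) - (W ω).2.2‖ ^ 2 := by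
      funext ω; exact hψW ω
    rw [heq]; exact hint_psi
  have hEq : ∫ ω, ‖gf (xn ω) - gn ω‖ ^ 2 ∂P = ∫ w, (∫ s, F (w, s) ∂D) ∂(Measure.map W P) := by
    calc ∫ ω, ‖gf (xn ω) - gn ω‖ ^ 2 ∂P = ∫ ω, F (W ω, ξ' ω) ∂P := by
          apply integral_congr_ae
          filter_upwards with ω
          rw [hFW ω]
      _ = ∫ p, F p ∂(Measure.map (fun ω => (W ω, ξ' ω)) P) :=
          (integral_map hpairmeas.aemeasurable hFmeas.aestronglyMeasurable).symm
      _ = ∫ p, F p ∂((Measure.map W P).prod D) := by rw [hmap]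
      _ = ∫ w, (∫ s, F (w, s) ∂D) ∂(Measure.map W P) := integral_prod F hFint
  rw [hEq]
  have hae : ∀ᵐ w ∂(Measure.map W P),
      (∫ s, F (w, s) ∂D) ≤ (1 - a) ^ 2 * ‖ψ w‖ ^ 2 + a ^ 2 * σ ^ 2 := by
    filter_upwards [hFint.prod_right_ae] with w hw
    set y := φ w with hy
    set v := ψ w with hv
    set Z : Ξ → EuclideanSpace ℝ (Fin d) := fun s => gf y - gS s y with hZdef
    have hZmeas : Measurable Z := by
      have h1 : Measurable (fun s : Ξ => gS s y) := by
        have heq : (fun s : Ξ => gS s y) = (Function.uncurry gS) ∘ (fun s => (s, y)) := rfl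
        rw [heq]
        exact hgSmeas.comp (measurable_id.prodMk measurable_const)
      exact measurable_const.sub h1
    have hFws : ∀ s, F (w, s) = (1-a)^2 * ‖v‖^2 + 2*((1-a)*a) * ⟪v, Z s⟫ + a^2 * ‖Z s‖^2 := by
      intro s
      simp only [hFdef]
      rw [norm_add_sq_real, real_inner_smul_left, real_inner_smul_right,
        norm_smul, norm_smul, mul_pow, mul_pow]
      simp only [Real.norm_eq_abs, sq_abs]
      ring
    have hZsq_int : Integrable (fun s => ‖Z s‖ ^ 2) D := by
      apply Integrable.mono'
        (((hw.add (integrable_const ((1-a)^2 * ‖v‖^2))).const_mul (2/a^2)))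
        ((hZmeas.norm.pow_const _).aestronglyMeasurable)
      filter_upwards with s
      simp only [Pi.add_apply]
      have h1 := norm_sub_le ((1-a) • v + a • Z s) ((1-a) • v)
      have e1 : ((1-a) • v + a • Z s) - (1-a) • v = a • Z s := by module
      rw [e1, norm_smul, norm_smul] at h1
      simp only [Real.norm_eq_abs] at h1
      rw [abs_of_pos ha0] at h1
      have hFw : F (w, s) = ‖(1-a) • v + a • Z s‖ ^ 2 := rfl
      have h2 : (a * ‖Z s‖)^2 ≤ (‖(1-a) • v + a • Z s‖ + |1-a| * ‖v‖)^2 := by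
        apply sq_le_sq' <;> nlinarith [norm_nonneg (Z s), norm_nonneg ((1-a) • v + a • Z s),
          norm_nonneg v, abs_nonneg (1-a), mul_nonneg (abs_nonneg (1-a)) (norm_nonneg v)]
      rw [Real.norm_eq_abs, abs_of_nonneg (by positivity : (0:ℝ) ≤ ‖Z s‖^2)]
      rw [hFw]
      have ha2 : (0:ℝ) < a^2 := by positivity
      rw [div_mul_eq_mul_div, le_div_iff₀ ha2]
      nlinarith [h2, sq_abs (1-a), sq_nonneg (‖(1-a) • v + a • Z s‖ - |1-a| * ‖v‖)]
    have hZint : Integrable Z D := by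
      apply Integrable.mono' (hZsq_int.add (integrable_const 1)) hZmeas.aestronglyMeasurable
      filter_upwards with s
      simp only [Pi.add_apply]
      nlinarith [sq_nonneg (‖Z s‖ - 1), norm_nonneg (Z s)]
    have hgSint : Integrable (fun s => gS s y) D := by
      have heq : (fun s => gS s y) = fun s => gf y - Z s := by
        funext s; simp [hZdef]
      rw [heq]; exact (integrable_const _).sub hZint
    have hZzero : ∫ s, Z s ∂D = 0 := by
      simp only [hZdef]
      rw [integral_sub (integrable_const _) hgSint, integral_const, hunbiased y]
      simp
    have hinner_int : Integrable (fun s => ⟪v, Z s⟫) D := hZint.const_inner v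
    have hIexp : ∫ s, F (w, s) ∂D
        = (1-a)^2 * ‖v‖^2 + 2*((1-a)*a) * ⟪v, ∫ s, Z s ∂D⟫ + a^2 * ∫ s, ‖Z s‖^2 ∂D := by
      have h1 : ∫ s, F (w, s) ∂D
          = ∫ s, ((1-a)^2 * ‖v‖^2 + (2*((1-a)*a) * ⟪v, Z s⟫ + a^2 * ‖Z s‖^2)) ∂D :=
        integral_congr_ae (Filter.Eventually.of_forall (fun s => by
          show F (w, s) = (1-a)^2 * ‖v‖^2 + (2*((1-a)*a) * ⟪v, Z s⟫ + a^2 * ‖Z s‖^2)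
          rw [hFws s]; ring))
      have hB : Integrable (fun s => 2*((1-a)*a) * ⟪v, Z s⟫) D := hinner_int.const_mul _
      have hC : Integrable (fun s => a^2 * ‖Z s‖^2) D := hZsq_int.const_mul _
      have hBC : Integrable (fun s => 2*((1-a)*a) * ⟪v, Z s⟫ + a^2 * ‖Z s‖^2) D := hB.add hC
      rw [h1, integral_add (integrable_const _) hBC, integral_add hB hC, integral_const,
        MeasureTheory.integral_const_mul, MeasureTheory.integral_const_mul, integral_inner hZint]
      simp only [measure_univ, ENNReal.toReal_one, probReal_univ, smul_eq_mul, one_mul]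
      ring
    rw [hIexp, hZzero, inner_zero_right]
    have hvy : ∫ s, ‖Z s‖^2 ∂D ≤ σ^2 := by
      have heq : (fun s => ‖Z s‖^2) = fun s => ‖gS s y - gf y‖^2 := by
        funext s; rw [hZdef, norm_sub_rev]
      rw [heq]; exact hvar y
    nlinarith [hvy, sq_nonneg a]
  calc ∫ w, (∫ s, F (w, s) ∂D) ∂(Measure.map W P)
      ≤ ∫ w, ((1 - a) ^ 2 * ‖ψ w‖ ^ 2 + a ^ 2 * σ ^ 2) ∂(Measure.map W P) := by
        exact integral_mono_ae hFint.integral_prod_left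
          ((hψWint.const_mul _).add (integrable_const _)) hae
    _ = (1 - a) ^ 2 * ∫ ω, ‖gf (xn ω) - (W ω).2.2‖ ^ 2 ∂P + a ^ 2 * σ ^ 2 := by
        haveI : IsProbabilityMeasure (Measure.map W P) := Measure.isProbabilityMeasure_map hW.aemeasurable
        have hψint2 : Integrable (fun w => (1-a)^2 * ‖ψ w‖^2) (Measure.map W P) :=
          hψWint.const_mul _
        have heq2 : ∫ x, ‖ψ (W x)‖^2 ∂P = ∫ ω, ‖gf (xn ω) - (W ω).2.2‖^2 ∂P :=
          integral_congr_ae (Filter.Eventually.of_forall hψW)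
        rw [integral_add hψint2 (integrable_const _), integral_const,
          MeasureTheory.integral_const_mul, integral_map hW.aemeasurable
            hψmeas2.aestronglyMeasurable, heq2]
        simp only [measure_univ, ENNReal.toReal_one, probReal_univ, smul_eq_mul, one_mul]

theorem sum_Icc_telescope (h : ℕ → ℝ) (T : ℕ) :
    ∑ t ∈ Finset.Icc 1 T, (h (t+1) - h t) = h (T+1) - h 1 := by
  rw [← Finset.Ico_add_one_right_eq_Icc, Finset.sum_Ico_eq_sum_range]
  have h2 : ∀ i ∈ Finset.range (T + 1 - 1), h (1 + i + 1) - h (1 + i)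
      = (fun j => h (j + 1)) (i + 1) - (fun j => h (j + 1)) i := by
    intro i _
    simp only []
    rw [Nat.add_comm 1 i]
  rw [Finset.sum_congr rfl h2, Finset.sum_range_sub (fun j => h (j + 1)) (T + 1 - 1)]
  simp

theorem sum_inv_le_log {m : ℝ} (hm : 0 < m) (T : ℕ) :
    ∑ t ∈ Finset.Icc 1 T, 1 / (m + t) ≤ Real.log (m + T) - Real.log m := by
  rw [← Finset.Ico_add_one_right_eq_Icc, Finset.sum_Ico_eq_sum_range]
  have key : ∀ i ∈ Finset.range (T + 1 - 1), 1 / (m + ((1 + i : ℕ) : ℝ))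
      ≤ (fun j : ℕ => Real.log (m + j)) (i + 1) - (fun j : ℕ => Real.log (m + j)) i := by
    intro i _
    simp only []
    have h1 : (0:ℝ) < m + i := by positivity
    have h2 : (0:ℝ) < m + i + 1 := by positivity
    have hlog := Real.log_le_sub_one_of_pos (x := (m + i) / (m + i + 1)) (by positivity)
    rw [Real.log_div (ne_of_gt h1) (ne_of_gt h2)] at hlog
    have e : (m + i) / (m + i + 1) - 1 = -(1 / (m + i + 1)) := by field_simp; ring
    rw [e] at hlog
    have e2 : m + ((1 + i : ℕ) : ℝ) = m + i + 1 := by push_cast; ring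
    have e3 : m + (((i + 1) : ℕ) : ℝ) = m + i + 1 := by push_cast; ring
    rw [e2, e3]
    linarith
  refine le_trans (Finset.sum_le_sum key) ?_
  rw [Finset.sum_range_sub (fun j : ℕ => Real.log (m + j)) (T + 1 - 1)]
  simp

theorem descent_arith {L ρ γ μt A1 B1 IP fx fx' : ℝ} (hρ : 0 < ρ) (hγ : 0 < γ)
    (hμ0 : 0 < μt) (hμL : L * μt ≤ ρ / (8*γ))
    (hA1 : 0 ≤ A1) (hB1 : 0 ≤ B1)
    (i1 : fx' ≤ fx + μt * IP + L/2 * (μt^2 * B1^2))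
    (i2 : IP ≤ A1*B1 - ρ/γ * B1^2) :
    fx' ≤ fx + μt * (γ/(2*ρ)) * A1^2 - μt * (7*ρ/(16*γ)) * B1^2 := by
  have young : A1*B1 ≤ γ/(2*ρ)*A1^2 + ρ/(2*γ)*B1^2 := by
    rw [div_mul_eq_mul_div, div_mul_eq_mul_div, div_add_div _ _ (by positivity) (by positivity),
      le_div_iff₀ (by positivity)]
    nlinarith [sq_nonneg (γ*A1 - ρ*B1), hρ, hγ]
  have h3 : μt * IP ≤ μt * (γ/(2*ρ)*A1^2 + ρ/(2*γ)*B1^2 - ρ/γ * B1^2) := by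
    apply mul_le_mul_of_nonneg_left _ hμ0.le
    linarith
  have h4 : L/2 * (μt^2 * B1^2) ≤ μt * (ρ/(16*γ)) * B1^2 := by
    have e : ρ/(8*γ)/2 = ρ/(16*γ) := by ring
    have h5 : L/2 * μt ≤ ρ/(16*γ) := by rw [← e]; linarith
    have h6 : L/2 * (μt^2 * B1^2) = (L/2 * μt) * (μt * B1^2) := by ring
    rw [h6]
    have h7 : (L/2 * μt) * (μt * B1^2) ≤ (ρ/(16*γ)) * (μt * B1^2) := by
      apply mul_le_mul_of_nonneg_right h5 (by positivity)
    linarith [h7]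
  have e2 : μt * (γ/(2*ρ)*A1^2 + ρ/(2*γ)*B1^2 - ρ/γ * B1^2) + μt * (ρ/(16*γ)) * B1^2
      = μt * (γ/(2*ρ)) * A1^2 - μt * (7*ρ/(16*γ)) * B1^2 := by
    field_simp
    ring
  linarith [h3, h4, i1, e2]

theorem rec_arith {a q Δn r : ℝ} (ha0 : 0 < a) (ha1 : a < 1) (hq : 0 ≤ q)
    (hΔ : 0 ≤ Δn) (hr : 0 ≤ r) (htri : q ≤ Δn + r) :
    (1-a)^2 * q^2 ≤ (1-a) * Δn^2 + 2/a * r^2 := by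
  have h1a : (0:ℝ) < 1 - a := by linarith
  have hq2 : q^2 ≤ (Δn + r)^2 := by nlinarith
  have step1 : a * ((1-a)^2 * q^2) ≤ a * ((1-a)^2 * (Δn + r)^2) := by
    apply mul_le_mul_of_nonneg_left _ ha0.le
    apply mul_le_mul_of_nonneg_left hq2 (by positivity)
  have step2 : a * (1-a) * (Δn + r)^2 ≤ a * Δn^2 + (1-a) * r^2 := by
    nlinarith [sq_nonneg (a*Δn - (1-a)*r)]
  have step3 : a * ((1-a)^2 * (Δn + r)^2) ≤ a * ((1-a) * Δn^2) + 2 * r^2 := by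
    have e : a * ((1-a)^2 * (Δn + r)^2) = (1-a) * (a * (1-a) * (Δn + r)^2) := by ring
    rw [e]
    have s4 : (1-a) * (a * (1-a) * (Δn + r)^2) ≤ (1-a) * (a * Δn^2 + (1-a) * r^2) :=
      mul_le_mul_of_nonneg_left step2 h1a.le
    have hx : (0:ℝ) ≤ a * (2 - a) * r^2 := by
      apply mul_nonneg (mul_nonneg ha0.le (by linarith)) (sq_nonneg r)
    nlinarith [s4, hx]
  have hkey : a * ((1-a)^2 * q^2) ≤ a * ((1-a) * Δn^2) + 2 * r^2 := le_trans step1 step3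
  have e : 2/a * r^2 = (2 * r^2) / a := by ring
  rw [e, ← sub_nonneg]
  have e4 : (1-a) * Δn^2 + 2 * r^2 / a - (1-a)^2 * q^2
      = (a * ((1-a) * Δn^2) + 2 * r^2 - a * ((1-a)^2 * q^2)) / a := by
    field_simp
  rw [e4]
  apply div_nonneg _ ha0.le
  linarith

set_option maxHeartbeats 4000000 in
/-- squared-error bound along SUPER-ADAM with `τ = 0` on a compact
convex set `X ⊆ ℝ^d`: under the hypotheses of Theorem 2 of SUPER-ADAM, for every `T ≥ 1`,
`(1/T) Σ_{t=1}^T E[(1/(4ρ²))‖∇f(x_t) − g_t‖² + (1/(4γ²))‖x̃_{t+1} − x_t‖²]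
  ≤ M (m+T)^{1/2}/T`,
where `M = (f(x_1) − f*)/(ργk) + 2σ²/(ργkL) + 2mσ² ln(m+T)/(ργkL)`. -/
theorem statement17 {d : ℕ} {Ω : Type*} [MeasurableSpace Ω] (P : Measure Ω)
    [IsProbabilityMeasure P] {Ξ : Type*} [MeasurableSpace Ξ] (D : Measure Ξ)
    [IsProbabilityMeasure D]
    (X : Set (EuclideanSpace ℝ (Fin d))) (hXne : X.Nonempty)
    (hXcompact : IsCompact X) (hXconvex : Convex ℝ X)
    (fS : Ξ → EuclideanSpace ℝ (Fin d) → ℝ)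
    (gS : Ξ → EuclideanSpace ℝ (Fin d) → EuclideanSpace ℝ (Fin d))
    (f : EuclideanSpace ℝ (Fin d) → ℝ)
    (gf : EuclideanSpace ℝ (Fin d) → EuclideanSpace ℝ (Fin d))
    (L σ ρ γ k m c fstar : ℝ) (hL : 0 < L) (hσ : 0 ≤ σ) (hρ : 0 < ρ)
    (hf : ∀ x, f x = ∫ ξ, fS ξ x ∂D)
    (hgS : ∀ ξ x, HasGradientAt (fS ξ) (gS ξ x) x)
    (hgf : ∀ x, HasGradientAt f (gf x) x)
    (hsmooth : ∀ x y : EuclideanSpace ℝ (Fin d), ‖gf x - gf y‖ ≤ L * ‖x - y‖)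
    (hunbiased : ∀ x, ∫ ξ, gS ξ x ∂D = gf x)
    (hvar : ∀ x, ∫ ξ, ‖gS ξ x - gf x‖ ^ 2 ∂D ≤ σ ^ 2)
    (hgSmeas : Measurable (Function.uncurry gS))
    (hfstar : ∀ x ∈ X, fstar ≤ f x)
    (hk : 0 < k)
    (hm : k ^ 2 ≤ m)
    (μ α : ℕ → ℝ)
    (hμ : ∀ t : ℕ, μ t = k / (m + t) ^ ((1 : ℝ) / 2))
    (hα : ∀ t : ℕ, α (t + 1) = c * μ t)
    (hγ0 : 0 < γ) (hγ : γ ≤ ρ * m ^ ((1 : ℝ) / 2) / (8 * L * k))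
    (hc1 : 8 * L * γ / ρ ≤ c) (hc2 : c ≤ m ^ ((1 : ℝ) / 2) / k)
    (x xtil g : ℕ → Ω → EuclideanSpace ℝ (Fin d))
    (ξ : ℕ → Ω → Ξ) (H : ℕ → Ω → Matrix (Fin d) (Fin d) ℝ)
    (x1 : EuclideanSpace ℝ (Fin d)) (hx1X : x1 ∈ X) (hx1 : ∀ ω, x 1 ω = x1)
    (hxmeas : ∀ t, Measurable (x t)) (hxtilmeas : ∀ t, Measurable (xtil t))
    (hgmeas : ∀ t, Measurable (g t)) (hξmeas : ∀ t, Measurable (ξ t))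
    (hHsymm : ∀ t ω, (H t ω).IsSymm)
    (hHpd : ∀ t ω (v : EuclideanSpace ℝ (Fin d)),
      ρ * ‖v‖ ^ 2 ≤ ⟪(Matrix.toEuclideanCLM (𝕜 := ℝ) (H t ω)) v, v⟫)
    (hxtilX : ∀ t, 1 ≤ t → ∀ ω, xtil t ω ∈ X)
    (hxtilmin : ∀ t, 1 ≤ t → ∀ ω, ∀ y ∈ X,
      ⟪g t ω, xtil t ω⟫ + (1 / (2 * γ))
          * ⟪(Matrix.toEuclideanCLM (𝕜 := ℝ) (H t ω)) (xtil t ω - x t ω), xtil t ω - x t ω⟫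
        ≤ ⟪g t ω, y⟫ + (1 / (2 * γ))
          * ⟪(Matrix.toEuclideanCLM (𝕜 := ℝ) (H t ω)) (y - x t ω), y - x t ω⟫)
    (hxrec : ∀ t, 1 ≤ t → ∀ ω, x (t + 1) ω = (1 - μ t) • x t ω + μ t • xtil t ω)
    (hg1 : ∀ ω, g 1 ω = gS (ξ 1 ω) (x 1 ω))
    (hgrec : ∀ t, 1 ≤ t → ∀ ω,
      g (t + 1) ω = (1 - α (t + 1)) • g t ω + α (t + 1) • gS (ξ (t + 1) ω) (x (t + 1) ω))
    (hlaw : ∀ t, Measure.map (ξ t) P = D)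
    (hindep : ∀ t, 1 ≤ t → IndepFun (fun ω => (x t ω, xtil t ω, g t ω)) (ξ (t + 1)) P)
    (hint1 : ∀ t, 1 ≤ t → Integrable (fun ω => ‖gf (x t ω) - g t ω‖ ^ 2) P)
    (hint2 : ∀ t, 1 ≤ t → Integrable (fun ω => ‖xtil t ω - x t ω‖ ^ 2) P) :
    ∀ T : ℕ, 1 ≤ T → ∀ M : ℝ,
      M = (f x1 - fstar) / (ρ * γ * k) + 2 * σ ^ 2 / (ρ * γ * k * L)
          + 2 * m * σ ^ 2 / (ρ * γ * k * L) * Real.log (m + T) →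
      (1 / (T : ℝ)) * ∑ t ∈ Finset.Icc 1 T,
          ∫ ω, ((1 / (4 * ρ ^ 2)) * ‖gf (x t ω) - g t ω‖ ^ 2
            + (1 / (4 * γ ^ 2)) * ‖xtil t ω - x t ω‖ ^ 2) ∂P
        ≤ M * (m + T) ^ ((1 : ℝ) / 2) / (T : ℝ) := by
  intro T hT M hM
  -- abbreviations
  obtain ⟨A, hA⟩ : ∃ A : ℕ → ℝ, ∀ t, A t = ∫ ω, ‖gf (x t ω) - g t ω‖ ^ 2 ∂P :=
    ⟨_, fun _ => rfl⟩
  obtain ⟨B, hB⟩ : ∃ B : ℕ → ℝ, ∀ t, B t = ∫ ω, ‖xtil t ω - x t ω‖ ^ 2 ∂P :=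
    ⟨_, fun _ => rfl⟩
  obtain ⟨Fn, hFn⟩ : ∃ Fn : ℕ → ℝ, ∀ t, Fn t = ∫ ω, f (x t ω) ∂P :=
    ⟨_, fun _ => rfl⟩
  -- basic positivity
  have hm0 : (0:ℝ) < m := lt_of_lt_of_le (by positivity) hm
  have hc0 : (0:ℝ) < c := lt_of_lt_of_le (by positivity) hc1
  have hAnn : ∀ t, 0 ≤ A t := fun t => by
    rw [hA]; exact integral_nonneg (fun ω => by positivity)
  have hBnn : ∀ t, 0 ≤ B t := fun t => by
    rw [hB]; exact integral_nonneg (fun ω => by positivity)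
  -- rpow facts
  have hsm : (0:ℝ) < m ^ ((1:ℝ)/2) := Real.rpow_pos_of_pos hm0 _
  have hst : ∀ t : ℕ, (0:ℝ) < (m + t) ^ ((1:ℝ)/2) := fun t =>
    Real.rpow_pos_of_pos (by positivity) _
  have hsq : ∀ z : ℝ, 0 ≤ z → (z ^ ((1:ℝ)/2))^2 = z := by
    intro z hz
    rw [← Real.rpow_natCast (z ^ ((1:ℝ)/2)) 2, ← Real.rpow_mul hz]
    norm_num
  have hks : k ≤ m ^ ((1:ℝ)/2) := by
    have h1 : ((k^2 : ℝ)) ^ ((1:ℝ)/2) ≤ m ^ ((1:ℝ)/2) :=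
      Real.rpow_le_rpow (by positivity) hm (by norm_num)
    have h2 : ((k^2 : ℝ)) ^ ((1:ℝ)/2) = k := by
      rw [← Real.rpow_natCast k 2, ← Real.rpow_mul hk.le]
      norm_num
    rwa [h2] at h1
  have hmono : ∀ s t : ℕ, s ≤ t → (m + (s:ℝ)) ^ ((1:ℝ)/2) ≤ (m + (t:ℝ)) ^ ((1:ℝ)/2) := by
    intro s t hstle
    apply Real.rpow_le_rpow (by positivity) _ (by norm_num)
    have : (s:ℝ) ≤ (t:ℝ) := Nat.cast_le.mpr hstle
    linarith
  have hsm_le : ∀ t : ℕ, m ^ ((1:ℝ)/2) ≤ (m + (t:ℝ)) ^ ((1:ℝ)/2) := by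
    intro t
    apply Real.rpow_le_rpow hm0.le _ (by norm_num)
    have : (0:ℝ) ≤ (t:ℝ) := Nat.cast_nonneg t
    linarith
  have hμ0 : ∀ t, 0 < μ t := fun t => by
    rw [hμ]; exact div_pos hk (hst t)
  have hμ1 : ∀ t, μ t ≤ 1 := fun t => by
    rw [hμ, div_le_one (hst t)]
    exact hks.trans (hsm_le t)
  have hμmono : ∀ s t : ℕ, s ≤ t → μ t ≤ μ s := by
    intro s t hstle
    rw [hμ, hμ, div_le_div_iff₀ (hst t) (hst s)]
    exact mul_le_mul_of_nonneg_left (hmono s t hstle) hk.le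
  have hLk : γ * (8 * L * k) ≤ ρ * m ^ ((1:ℝ)/2) := by
    rw [le_div_iff₀ (by positivity)] at hγ
    exact hγ
  have hμL : ∀ t, L * μ t ≤ ρ / (8 * γ) := by
    intro t
    rw [hμ, le_div_iff₀ (by positivity), ← mul_div_assoc, div_mul_eq_mul_div,
      div_le_iff₀ (hst t)]
    have h1 : ρ * m ^ ((1:ℝ)/2) ≤ ρ * (m + (t:ℝ)) ^ ((1:ℝ)/2) := by
      apply mul_le_mul_of_nonneg_left (hsm_le t) hρ.le
    nlinarith [hLk, h1]
  have hρc : 8 * L * γ ≤ ρ * c := by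
    rw [div_le_iff₀ hρ] at hc1
    linarith
  have ha0 : ∀ t, 0 < α (t+1) := fun t => by
    rw [hα]; exact mul_pos hc0 (hμ0 t)
  have ha1 : ∀ t, 1 ≤ t → α (t+1) < 1 := by
    intro t ht
    rw [hα]
    have h1 : c * μ t ≤ (m ^ ((1:ℝ)/2) / k) * μ t :=
      mul_le_mul_of_nonneg_right hc2 (hμ0 t).le
    have h2 : (m ^ ((1:ℝ)/2) / k) * μ t = m ^ ((1:ℝ)/2) / (m + (t:ℝ)) ^ ((1:ℝ)/2) := by
      rw [hμ]; field_simp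
    have h3 : m ^ ((1:ℝ)/2) < (m + (t:ℝ)) ^ ((1:ℝ)/2) := by
      apply Real.rpow_lt_rpow hm0.le _ (by norm_num)
      have : (1:ℝ) ≤ (t:ℝ) := by exact_mod_cast ht
      linarith
    have h4 : m ^ ((1:ℝ)/2) / (m + (t:ℝ)) ^ ((1:ℝ)/2) < 1 := by
      rw [div_lt_one (hst t)]; exact h3
    linarith
  -- continuity
  have hgfc : Continuous gf := by
    have hlip : LipschitzWith (Real.toNNReal L) gf := by
      apply LipschitzWith.of_dist_le_mul
      intro x' y'
      rw [dist_eq_norm, dist_eq_norm]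
      calc ‖gf x' - gf y'‖ ≤ L * ‖x' - y'‖ := hsmooth x' y'
        _ ≤ (Real.toNNReal L) * ‖x' - y'‖ := by
            gcongr
            exact Real.le_coe_toNNReal L
    exact hlip.continuous
  have hfc : Continuous f := by
    have hdiff : Differentiable ℝ f := fun x' => (hgf x').hasFDerivAt.differentiableAt
    exact hdiff.continuous
  -- membership
  have hxX : ∀ t, 1 ≤ t → ∀ ω, x t ω ∈ X := by
    intro t
    induction t with
    | zero => omega
    | succ n ih =>
      intro _ ω
      rcases Nat.eq_zero_or_pos n with hn | hn
      · subst hn; rw [hx1 ω]; exact hx1X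
      · have hn1 : 1 ≤ n := hn
        rw [hxrec n hn1 ω]
        exact hXconvex (ih hn1 ω) (hxtilX n hn1 ω)
          (by linarith [hμ1 n]) (hμ0 n).le (by ring)
  -- boundedness & integrability of f ∘ x t
  obtain ⟨C, hC⟩ := hXcompact.exists_bound_of_continuousOn hfc.continuousOn
  have hfint : ∀ t, 1 ≤ t → Integrable (fun ω => f (x t ω)) P := by
    intro t ht
    apply Integrable.mono' (integrable_const C)
      ((hfc.measurable.comp (hxmeas t)).aestronglyMeasurable)
    filter_upwards with ω
    exact hC _ (hxX t ht ω)
  -- integrated descent inequality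
  have hD : ∀ t, 1 ≤ t →
      Fn (t+1) ≤ Fn t + μ t * (γ/(2*ρ)) * A t - μ t * (7*ρ/(16*γ)) * B t := by
    intro t ht
    have hpt : ∀ ω, f (x (t+1) ω) ≤ f (x t ω)
        + μ t * (γ/(2*ρ)) * ‖gf (x t ω) - g t ω‖^2
        - μ t * (7*ρ/(16*γ)) * ‖xtil t ω - x t ω‖^2 := by
      intro ω
      have hdx : x (t+1) ω - x t ω = μ t • (xtil t ω - x t ω) := by
        rw [hxrec t ht ω]; module
      have i1 : f (x (t+1) ω) ≤ f (x t ω) + μ t * ⟪gf (x t ω), xtil t ω - x t ω⟫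
          + L/2 * ((μ t)^2 * ‖xtil t ω - x t ω‖^2) := by
        have hdl := descent_lemma' hgf hsmooth (x t ω) (x (t+1) ω)
        rw [hdx, real_inner_smul_right, norm_smul] at hdl
        simp only [Real.norm_eq_abs] at hdl
        have e : (|μ t| * ‖xtil t ω - x t ω‖)^2 = (μ t)^2 * ‖xtil t ω - x t ω‖^2 := by
          rw [mul_pow, sq_abs]
        rw [e] at hdl
        linarith [hdl]
      have hQ := hHpd t ω (xtil t ω - x t ω)
      have hvi := vi_step hXconvex hγ0 (Matrix.toEuclideanCLM (𝕜 := ℝ) (H t ω))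
        (fun v => le_trans (by positivity) (hHpd t ω v)) (hxX t ht ω) (hxtilX t ht ω)
        (hxtilmin t ht ω)
      have i2 : ⟪gf (x t ω), xtil t ω - x t ω⟫
          ≤ ‖gf (x t ω) - g t ω‖ * ‖xtil t ω - x t ω‖ - ρ/γ * ‖xtil t ω - x t ω‖^2 := by
        have hdec : ⟪gf (x t ω), xtil t ω - x t ω⟫
            = ⟪gf (x t ω) - g t ω, xtil t ω - x t ω⟫ + ⟪g t ω, xtil t ω - x t ω⟫ := by
          rw [inner_sub_left]; ring
        have hcs : ⟪gf (x t ω) - g t ω, xtil t ω - x t ω⟫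
            ≤ ‖gf (x t ω) - g t ω‖ * ‖xtil t ω - x t ω‖ := real_inner_le_norm _ _
        have hg2 : ⟪g t ω, xtil t ω - x t ω⟫ ≤ - (ρ/γ) * ‖xtil t ω - x t ω‖^2 := by
          have h5 : -(1/γ) * ⟪(Matrix.toEuclideanCLM (𝕜 := ℝ) (H t ω)) (xtil t ω - x t ω),
              xtil t ω - x t ω⟫ ≤ -(1/γ) * (ρ * ‖xtil t ω - x t ω‖^2) := by
            have h5' := mul_le_mul_of_nonneg_left hQ (by positivity : (0:ℝ) ≤ 1/γ)
            linarith [h5']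
          have e5 : -(1/γ) * (ρ * ‖xtil t ω - x t ω‖^2) = - (ρ/γ) * ‖xtil t ω - x t ω‖^2 := by
            ring
          rw [e5] at h5
          exact le_trans hvi h5
        rw [hdec]; linarith
      exact descent_arith hρ hγ0 (hμ0 t) (hμL t) (norm_nonneg _) (norm_nonneg _) i1 i2
    have hI2 : Integrable (fun ω => μ t * (γ/(2*ρ)) * ‖gf (x t ω) - g t ω‖^2) P :=
      (hint1 t ht).const_mul _
    have hI3 : Integrable (fun ω => μ t * (7*ρ/(16*γ)) * ‖xtil t ω - x t ω‖^2) P :=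
      (hint2 t ht).const_mul _
    have hIsum : Integrable (fun ω => f (x t ω)
        + μ t * (γ/(2*ρ)) * ‖gf (x t ω) - g t ω‖^2) P := (hfint t ht).add hI2
    have hIr : Integrable (fun ω => f (x t ω)
        + μ t * (γ/(2*ρ)) * ‖gf (x t ω) - g t ω‖^2
        - μ t * (7*ρ/(16*γ)) * ‖xtil t ω - x t ω‖^2) P := hIsum.sub hI3
    have hmono2 := integral_mono_ae (hfint (t+1) (by omega)) hIr
      (Filter.Eventually.of_forall hpt)
    rw [integral_sub hIsum hI3, integral_add (hfint t ht) hI2,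
      MeasureTheory.integral_const_mul, MeasureTheory.integral_const_mul] at hmono2
    rw [hFn, hFn, hA, hB]
    exact hmono2
  -- recursion inequality
  have hR : ∀ t, 1 ≤ t → A (t+1) ≤ (1 - α (t+1)) * A t
      + (2/(α (t+1)) * (L * μ t)^2) * B t + (α (t+1))^2 * σ^2 := by
    intro t ht
    have ha0' := ha0 t
    have ha1' := ha1 t ht
    have hWmeas : Measurable (fun ω => (x t ω, xtil t ω, g t ω)) :=
      (hxmeas t).prodMk ((hxtilmeas t).prodMk (hgmeas t))
    have htri : ∀ ω, ‖gf (x (t+1) ω) - g t ω‖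
        ≤ ‖gf (x t ω) - g t ω‖ + L * μ t * ‖xtil t ω - x t ω‖ := by
      intro ω
      have hdx : x (t+1) ω - x t ω = μ t • (xtil t ω - x t ω) := by
        rw [hxrec t ht ω]; module
      have e1 : gf (x (t+1) ω) - g t ω
          = (gf (x t ω) - g t ω) + (gf (x (t+1) ω) - gf (x t ω)) := by module
      calc ‖gf (x (t+1) ω) - g t ω‖
          ≤ ‖gf (x t ω) - g t ω‖ + ‖gf (x (t+1) ω) - gf (x t ω)‖ := by
            rw [e1]; exact norm_add_le _ _
        _ ≤ ‖gf (x t ω) - g t ω‖ + L * μ t * ‖xtil t ω - x t ω‖ := by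
            have h6 : ‖gf (x (t+1) ω) - gf (x t ω)‖ ≤ L * ‖x (t+1) ω - x t ω‖ := hsmooth _ _
            rw [hdx, norm_smul] at h6
            simp only [Real.norm_eq_abs, abs_of_pos (hμ0 t)] at h6
            have : L * (μ t * ‖xtil t ω - x t ω‖) = L * μ t * ‖xtil t ω - x t ω‖ := by ring
            linarith [h6]
    have hpsimeas : Measurable (fun ω => ‖gf (x (t+1) ω) - g t ω‖^2) :=
      (((hgfc.measurable.comp (hxmeas (t+1))).sub (hgmeas t)).norm.pow_const 2)
    have hint_psi : Integrable (fun ω => ‖gf (x (t+1) ω) - g t ω‖^2) P := by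
      apply Integrable.mono' (((hint1 t ht).const_mul 2).add ((hint2 t ht).const_mul
        (2 * (L * μ t)^2))) hpsimeas.aestronglyMeasurable
      filter_upwards with ω
      simp only [Pi.add_apply]
      rw [Real.norm_eq_abs, abs_of_nonneg (by positivity : (0:ℝ) ≤ ‖gf (x (t+1) ω) - g t ω‖^2)]
      have h7 := htri ω
      nlinarith [norm_nonneg (gf (x (t+1) ω) - g t ω), norm_nonneg (gf (x t ω) - g t ω),
        norm_nonneg (xtil t ω - x t ω),
        sq_nonneg (‖gf (x t ω) - g t ω‖ - L * μ t * ‖xtil t ω - x t ω‖)]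
    have hcore := recursion_core P D gS hgSmeas gf hgfc hunbiased hvar
      (fun ω => (x t ω, xtil t ω, g t ω)) hWmeas
      (ξ (t+1)) (hξmeas (t+1)) (hindep t ht) (hlaw (t+1)) ha0'
      (x (t+1)) (g (t+1)) (fun ω => hxrec t ht ω) (fun ω => hgrec t ht ω)
      (hint1 (t+1) (by omega)) hint_psi
    -- bound the middle term
    have hEpsi : (1 - α (t+1))^2 * ∫ ω, ‖gf (x (t+1) ω) - g t ω‖^2 ∂P
        ≤ (1 - α (t+1)) * A t + (2/(α (t+1)) * (L * μ t)^2) * B t := by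
      have hptw : ∀ ω, (1 - α (t+1))^2 * ‖gf (x (t+1) ω) - g t ω‖^2
          ≤ (1 - α (t+1)) * ‖gf (x t ω) - g t ω‖^2
            + (2/(α (t+1)) * (L * μ t)^2) * ‖xtil t ω - x t ω‖^2 := by
        intro ω
        have hra := rec_arith ha0' ha1' (norm_nonneg (gf (x (t+1) ω) - g t ω))
          (norm_nonneg (gf (x t ω) - g t ω))
          (mul_nonneg (mul_nonneg hL.le (hμ0 t).le) (norm_nonneg _)) (htri ω)
        have e8 : 2/(α (t+1)) * (L * μ t * ‖xtil t ω - x t ω‖)^2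
            = (2/(α (t+1)) * (L * μ t)^2) * ‖xtil t ω - x t ω‖^2 := by ring
        rw [e8] at hra
        exact hra
      have hIL : Integrable (fun ω => (1 - α (t+1))^2 * ‖gf (x (t+1) ω) - g t ω‖^2) P :=
        hint_psi.const_mul _
      have hIR : Integrable (fun ω => (1 - α (t+1)) * ‖gf (x t ω) - g t ω‖^2
          + (2/(α (t+1)) * (L * μ t)^2) * ‖xtil t ω - x t ω‖^2) P :=
        ((hint1 t ht).const_mul _).add ((hint2 t ht).const_mul _)
      have h9 := integral_mono_ae hIL hIR (Filter.Eventually.of_forall hptw)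
      rw [MeasureTheory.integral_const_mul, integral_add ((hint1 t ht).const_mul _)
        ((hint2 t ht).const_mul _), MeasureTheory.integral_const_mul,
        MeasureTheory.integral_const_mul] at h9
      rw [hA, hB]
      exact h9
    rw [hA]
    calc ∫ ω, ‖gf (x (t+1) ω) - g (t+1) ω‖^2 ∂P
        ≤ (1 - α (t+1))^2 * ∫ ω, ‖gf (x (t+1) ω) - g t ω‖^2 ∂P + (α (t+1))^2 * σ^2 := hcore
      _ ≤ (1 - α (t+1)) * A t + (2/(α (t+1)) * (L * μ t)^2) * B t + (α (t+1))^2 * σ^2 := by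
          linarith [hEpsi]
  -- A 1 ≤ σ²
  have hA1 : A 1 ≤ σ^2 := by
    rw [hA]
    have hmeas1 : Measurable (fun s : Ξ => ‖gS s x1 - gf x1‖^2) := by
      have h1 : Measurable (fun s : Ξ => gS s x1) := by
        have heq : (fun s : Ξ => gS s x1) = (Function.uncurry gS) ∘ (fun s => (s, x1)) := rfl
        rw [heq]
        exact hgSmeas.comp (measurable_id.prodMk measurable_const)
      exact (h1.sub measurable_const).norm.pow_const 2
    calc ∫ ω, ‖gf (x 1 ω) - g 1 ω‖^2 ∂P
        = ∫ ω, (fun s => ‖gS s x1 - gf x1‖^2) (ξ 1 ω) ∂P := by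
          apply integral_congr_ae
          filter_upwards with ω
          rw [hg1 ω, hx1 ω, norm_sub_rev]
      _ = ∫ s, ‖gS s x1 - gf x1‖^2 ∂D := by
          rw [← hlaw 1]
          exact (integral_map (hξmeas 1).aemeasurable hmeas1.aestronglyMeasurable).symm
      _ ≤ σ^2 := hvar x1
  -- Fn basics
  have hFn1 : Fn 1 = f x1 := by
    rw [hFn]
    have : ∫ ω, f (x 1 ω) ∂P = ∫ _ω, f x1 ∂P :=
      integral_congr_ae (Filter.Eventually.of_forall (fun ω => congrArg f (hx1 ω)))
    rw [this, integral_const]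
    simp
  have hFnT : fstar ≤ Fn (T+1) := by
    rw [hFn]
    have h1 := integral_mono_ae (integrable_const fstar) (hfint (T+1) (by omega))
      (Filter.Eventually.of_forall (fun ω => hfstar _ (hxX (T+1) (by omega) ω)))
    rw [integral_const] at h1
    simpa using h1
  -- sums
  have hSA := Finset.sum_nonneg (fun t (_ : t ∈ Finset.Icc 1 T) =>
    mul_nonneg (hμ0 t).le (hAnn t))
  have hSB := Finset.sum_nonneg (fun t (_ : t ∈ Finset.Icc 1 T) =>
    mul_nonneg (hμ0 t).le (hBnn t))
  set SA := ∑ t ∈ Finset.Icc 1 T, μ t * A t with hSAdef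
  set SB := ∑ t ∈ Finset.Icc 1 T, μ t * B t with hSBdef
  set SQ := ∑ t ∈ Finset.Icc 1 T, (μ t)^2 with hSQdef
  -- summed descent
  have hsum1 : Fn (T+1) - Fn 1 ≤ (γ/(2*ρ)) * SA - (7*ρ/(16*γ)) * SB := by
    have h1 : Fn (T+1) - Fn 1 = ∑ t ∈ Finset.Icc 1 T, (Fn (t+1) - Fn t) :=
      (sum_Icc_telescope Fn T).symm
    rw [h1]
    have h2 : ∀ t ∈ Finset.Icc 1 T, Fn (t+1) - Fn t
        ≤ (γ/(2*ρ)) * (μ t * A t) - (7*ρ/(16*γ)) * (μ t * B t) := by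
      intro t htmem
      rw [Finset.mem_Icc] at htmem
      have := hD t htmem.1
      have e : μ t * (γ/(2*ρ)) * A t = (γ/(2*ρ)) * (μ t * A t) := by ring
      have e' : μ t * (7*ρ/(16*γ)) * B t = (7*ρ/(16*γ)) * (μ t * B t) := by ring
      linarith [this, e, e']
    calc ∑ t ∈ Finset.Icc 1 T, (Fn (t+1) - Fn t)
        ≤ ∑ t ∈ Finset.Icc 1 T, ((γ/(2*ρ)) * (μ t * A t) - (7*ρ/(16*γ)) * (μ t * B t)) :=
          Finset.sum_le_sum h2
      _ = (γ/(2*ρ)) * SA - (7*ρ/(16*γ)) * SB := by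
          rw [Finset.sum_sub_distrib, ← Finset.mul_sum, ← Finset.mul_sum]
  -- summed recursion
  have hsum2 : SA ≤ (1/c) * σ^2 + (ρ^2/(32*γ^2)) * SB + c * σ^2 * SQ := by
    have hper : ∀ t ∈ Finset.Icc 1 T, μ t * A t
        ≤ (1/c) * (A t - A (t+1)) + (ρ^2/(32*γ^2)) * (μ t * B t) + c * σ^2 * (μ t)^2 := by
      intro t htmem
      rw [Finset.mem_Icc] at htmem
      have hRt := hR t htmem.1
      rw [hα t] at hRt
      -- hRt : A (t+1) ≤ (1 - c*μ t)*A t + (2/(c*μ t) * (L*μ t)^2)*B t + (c*μ t)^2*σ^2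
      have hμt := hμ0 t
      have hcoef : 2/(c*μ t) * (L*μ t)^2 ≤ c * (ρ^2/(32*γ^2)) * μ t := by
        have e : 2/(c*μ t) * (L*μ t)^2 = (2*L^2/c) * μ t := by
          field_simp
        rw [e]
        apply mul_le_mul_of_nonneg_right _ hμt.le
        rw [div_le_iff₀ hc0]
        have h64 : 64 * L^2 * γ^2 ≤ ρ^2 * c^2 := by
          nlinarith [hρc, mul_pos hL hγ0, mul_pos hρ hc0]
        have e2 : c * (ρ^2/(32*γ^2)) * c = (ρ^2*c^2)/(32*γ^2) := by
          field_simp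
        rw [e2, le_div_iff₀ (by positivity : (0:ℝ) < 32*γ^2)]
        linarith [h64]
      have hBt := hBnn t
      have h10 : (2/(c*μ t) * (L*μ t)^2) * B t ≤ (c * (ρ^2/(32*γ^2)) * μ t) * B t :=
        mul_le_mul_of_nonneg_right hcoef hBt
      -- from hRt : c*μ t*A t ≤ A t - A (t+1) + middle + noise
      have h11 : c * (μ t * A t) ≤ (A t - A (t+1)) + (c * (ρ^2/(32*γ^2)) * μ t) * B t
          + (c*μ t)^2 * σ^2 := by nlinarith [hRt, h10]
      -- divide by c
      have h12 : μ t * A t ≤ (1/c) * ((A t - A (t+1)) + (c * (ρ^2/(32*γ^2)) * μ t) * B t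
          + (c*μ t)^2 * σ^2) := by
        rw [← sub_nonneg]
        have e13 : (1/c) * ((A t - A (t+1)) + (c * (ρ^2/(32*γ^2)) * μ t) * B t
            + (c*μ t)^2 * σ^2) - μ t * A t
            = (((A t - A (t+1)) + (c * (ρ^2/(32*γ^2)) * μ t) * B t
            + (c*μ t)^2 * σ^2) - c * (μ t * A t)) / c := by
          field_simp
        rw [e13]
        apply div_nonneg _ hc0.le
        linarith [h11]
      have e14 : (1/c) * ((A t - A (t+1)) + (c * (ρ^2/(32*γ^2)) * μ t) * B t
          + (c*μ t)^2 * σ^2)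
          = (1/c) * (A t - A (t+1)) + (ρ^2/(32*γ^2)) * (μ t * B t) + c * σ^2 * (μ t)^2 := by
        field_simp
      rw [e14] at h12
      exact h12
    have htele : ∑ t ∈ Finset.Icc 1 T, (A t - A (t+1)) = A 1 - A (T+1) := by
      have h := sum_Icc_telescope (fun t => - A t) T
      have e : ∀ t ∈ Finset.Icc 1 T,
          (fun t => - A t) (t+1) - (fun t => - A t) t = A t - A (t+1) := by
        intro t _
        simp only []
        ring
      rw [Finset.sum_congr rfl e] at h
      rw [h]
      ring
    calc SA ≤ ∑ t ∈ Finset.Icc 1 T, ((1/c) * (A t - A (t+1))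
          + (ρ^2/(32*γ^2)) * (μ t * B t) + c * σ^2 * (μ t)^2) := Finset.sum_le_sum hper
      _ = (1/c) * (A 1 - A (T+1)) + (ρ^2/(32*γ^2)) * SB + c * σ^2 * SQ := by
          rw [Finset.sum_add_distrib, Finset.sum_add_distrib, ← Finset.mul_sum,
            ← Finset.mul_sum, ← Finset.mul_sum, htele]
      _ ≤ (1/c) * σ^2 + (ρ^2/(32*γ^2)) * SB + c * σ^2 * SQ := by
          have h15 : A 1 - A (T+1) ≤ σ^2 := by linarith [hA1, hAnn (T+1)]
          have h16 : (1/c) * (A 1 - A (T+1)) ≤ (1/c) * σ^2 :=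
            mul_le_mul_of_nonneg_left h15 (by positivity)
          linarith
  -- SQ bound
  have hSQb : SQ ≤ k^2 * (Real.log (m + T) - Real.log m) := by
    have hper : ∀ t ∈ Finset.Icc 1 T, (μ t)^2 = k^2 * (1/(m + (t:ℝ))) := by
      intro t _
      rw [hμ, div_pow, hsq (m + (t:ℝ)) (by positivity)]
      ring
    rw [hSQdef, Finset.sum_congr rfl hper, ← Finset.mul_sum]
    apply mul_le_mul_of_nonneg_left (sum_inv_le_log hm0 T) (by positivity)
  have hSQnn : 0 ≤ SQ := Finset.sum_nonneg (fun t _ => sq_nonneg _)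
  have hlogdiff : 0 ≤ Real.log (m + T) - Real.log m := by
    apply sub_nonneg.mpr
    apply Real.log_le_log hm0
    have : (0:ℝ) ≤ (T:ℝ) := Nat.cast_nonneg T
    linarith
  have hlogpos : 0 ≤ Real.log (m + T) := by
    apply Real.log_nonneg
    have : (1:ℝ) ≤ (T:ℝ) := by exact_mod_cast hT
    linarith
  have hmlog : m * (Real.log (m + T) - Real.log m) ≤ m * Real.log (m + T) + 1 := by
    have h1 : Real.log m⁻¹ ≤ m⁻¹ - 1 := Real.log_le_sub_one_of_pos (by positivity)
    rw [Real.log_inv] at h1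
    have h2 : m * (- Real.log m) ≤ m * (m⁻¹ - 1) :=
      mul_le_mul_of_nonneg_left h1 hm0.le
    have h3 : m * (m⁻¹ - 1) = 1 - m := by field_simp
    nlinarith [h2, h3]
  -- main combination
  have hγc : γ * c ≤ ρ * m / (8 * L * k^2) := by
    have h1 : γ * c ≤ (ρ * m ^ ((1:ℝ)/2) / (8 * L * k)) * (m ^ ((1:ℝ)/2) / k) :=
      mul_le_mul hγ hc2 hc0.le (by positivity)
    have h2 : (ρ * m ^ ((1:ℝ)/2) / (8 * L * k)) * (m ^ ((1:ℝ)/2) / k)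
        = ρ * ((m ^ ((1:ℝ)/2))^2) / (8 * L * k^2) := by
      field_simp
    rw [h2, hsq m hm0.le] at h1
    exact h1
  have hmain : (γ/(4*ρ)) * SA + (ρ/(4*γ)) * SB
      ≤ (f x1 - fstar) + 2*σ^2/L + 2*m*σ^2/L * Real.log (m + T) := by
    -- scaled sum2
    have hs2 : (3*γ/(4*ρ)) * SA ≤ (3*γ/(4*ρ)) * ((1/c) * σ^2)
        + (3*γ/(4*ρ)) * ((ρ^2/(32*γ^2)) * SB) + (3*γ/(4*ρ)) * (c * σ^2 * SQ) := by
      have := mul_le_mul_of_nonneg_left hsum2 (by positivity : (0:ℝ) ≤ 3*γ/(4*ρ))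
      linarith [this]
    have hb1 : (3*γ/(4*ρ)) * ((1/c) * σ^2) ≤ 3/(32*L) * σ^2 := by
      have h1 : (3*γ/(4*ρ)) * (1/c) ≤ 3/(32*L) := by
        rw [div_mul_div_comm, div_le_div_iff₀ (by positivity) (by positivity)]
        nlinarith [hρc, hγ0, hρ, hL, hc0]
      apply mul_le_mul_of_nonneg_right h1 (by positivity)
      |>.trans_eq' (by ring)
    have hb2eq : (3*γ/(4*ρ)) * ((ρ^2/(32*γ^2)) * SB) = (3*ρ/(128*γ)) * SB := by
      field_simp; ring
    have hb3 : (3*γ/(4*ρ)) * (c * σ^2 * SQ)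
        ≤ (3/(32*L)) * σ^2 * (m * Real.log (m + T) + 1) := by
      have h1 : (3*γ/(4*ρ)) * (c * σ^2 * SQ) = (γ * c) * (3/(4*ρ)) * (σ^2 * SQ) := by ring
      have h2 : (γ * c) * (3/(4*ρ)) * (σ^2 * SQ)
          ≤ (ρ * m / (8 * L * k^2)) * (3/(4*ρ)) * (σ^2 * SQ) := by
        apply mul_le_mul_of_nonneg_right _ (by positivity)
        apply mul_le_mul_of_nonneg_right hγc (by positivity)
      have h3 : (ρ * m / (8 * L * k^2)) * (3/(4*ρ)) * (σ^2 * SQ)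
          = (3*m/(32*L*k^2)) * (σ^2 * SQ) := by
        field_simp; ring
      have h4 : (3*m/(32*L*k^2)) * (σ^2 * SQ)
          ≤ (3*m/(32*L*k^2)) * (σ^2 * (k^2 * (Real.log (m + T) - Real.log m))) := by
        apply mul_le_mul_of_nonneg_left _ (by positivity)
        apply mul_le_mul_of_nonneg_left hSQb (by positivity)
      have h5 : (3*m/(32*L*k^2)) * (σ^2 * (k^2 * (Real.log (m + T) - Real.log m)))
          = (3/(32*L)) * σ^2 * (m * (Real.log (m + T) - Real.log m)) := by
        field_simp
      have h6 : (3/(32*L)) * σ^2 * (m * (Real.log (m + T) - Real.log m))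
          ≤ (3/(32*L)) * σ^2 * (m * Real.log (m + T) + 1) := by
        apply mul_le_mul_of_nonneg_left hmlog (by positivity)
      calc (3*γ/(4*ρ)) * (c * σ^2 * SQ) = (γ * c) * (3/(4*ρ)) * (σ^2 * SQ) := h1
        _ ≤ (ρ * m / (8 * L * k^2)) * (3/(4*ρ)) * (σ^2 * SQ) := h2
        _ = (3*m/(32*L*k^2)) * (σ^2 * SQ) := h3
        _ ≤ (3*m/(32*L*k^2)) * (σ^2 * (k^2 * (Real.log (m + T) - Real.log m))) := h4
        _ = (3/(32*L)) * σ^2 * (m * (Real.log (m + T) - Real.log m)) := h5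
        _ ≤ (3/(32*L)) * σ^2 * (m * Real.log (m + T) + 1) := h6
    -- from hsum1 and hFnT, hFn1
    have hs1 : (7*ρ/(16*γ)) * SB ≤ (f x1 - fstar) + (γ/(2*ρ)) * SA := by
      have h := hsum1
      rw [hFn1] at h
      linarith [hFnT]
    rw [hb2eq] at hs2
    have q1 : (γ/(2*ρ))*SA = (1/2)*((γ/ρ)*SA) := by ring
    have q2 : (3*γ/(4*ρ))*SA = (3/4)*((γ/ρ)*SA) := by ring
    have q3 : (γ/(4*ρ))*SA = (1/4)*((γ/ρ)*SA) := by ring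
    have q4 : (7*ρ/(16*γ))*SB = (7/16)*((ρ/γ)*SB) := by ring
    have q5 : (3*ρ/(128*γ))*SB = (3/128)*((ρ/γ)*SB) := by ring
    have q6 : (ρ/(4*γ))*SB = (1/4)*((ρ/γ)*SB) := by ring
    have q7 : 3/(32*L)*σ^2 = (3/32)*(σ^2/L) := by ring
    have q8 : (3/(32*L))*σ^2*(m*Real.log (m+T)+1)
        = (3/32)*(m*(σ^2/L)*Real.log (m+T)) + (3/32)*(σ^2/L) := by ring
    have q9 : 2*σ^2/L = 2*(σ^2/L) := by ring
    have q10 : 2*m*σ^2/L*Real.log (m+T) = 2*(m*(σ^2/L)*Real.log (m+T)) := by ring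
    have p1 : 0 ≤ (ρ/γ)*SB := mul_nonneg (by positivity) hSB
    have p2 : 0 ≤ σ^2/L := by positivity
    have p3 : 0 ≤ m*(σ^2/L)*Real.log (m+T) :=
      mul_nonneg (mul_nonneg hm0.le p2) hlogpos
    linarith [hs1, hs2, hb1, hb3, q1, q2, q3, q4, q5, q6, q7, q8, q9, q10, p1, p2, p3]
  -- final assembly
  have hTpos : (0:ℝ) < (T:ℝ) := by exact_mod_cast hT
  have hsplit : ∀ t ∈ Finset.Icc 1 T,
      (∫ ω, ((1 / (4 * ρ ^ 2)) * ‖gf (x t ω) - g t ω‖ ^ 2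
        + (1 / (4 * γ ^ 2)) * ‖xtil t ω - x t ω‖ ^ 2) ∂P)
      = (1/(4*ρ^2)) * A t + (1/(4*γ^2)) * B t := by
    intro t htmem
    rw [Finset.mem_Icc] at htmem
    have ht1 := htmem.1
    rw [integral_add ((hint1 t ht1).const_mul _) ((hint2 t ht1).const_mul _),
      MeasureTheory.integral_const_mul, MeasureTheory.integral_const_mul, hA, hB]
  set S := ∑ t ∈ Finset.Icc 1 T, ((1/(4*ρ^2)) * A t + (1/(4*γ^2)) * B t) with hSdef
  have hSnn : 0 ≤ S := Finset.sum_nonneg (fun t _ => by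
    have := hAnn t; have := hBnn t; positivity)
  have hμTS : μ T * S ≤ (1/(ρ*γ)) * ((γ/(4*ρ)) * SA + (ρ/(4*γ)) * SB) := by
    rw [hSdef, Finset.mul_sum]
    have hper : ∀ t ∈ Finset.Icc 1 T,
        μ T * ((1/(4*ρ^2)) * A t + (1/(4*γ^2)) * B t)
        ≤ (1/(ρ*γ)) * ((γ/(4*ρ)) * (μ t * A t) + (ρ/(4*γ)) * (μ t * B t)) := by
      intro t htmem
      rw [Finset.mem_Icc] at htmem
      have hμle := hμmono t T htmem.2
      have e : (1/(ρ*γ)) * ((γ/(4*ρ)) * (μ t * A t) + (ρ/(4*γ)) * (μ t * B t))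
          = μ t * ((1/(4*ρ^2)) * A t + (1/(4*γ^2)) * B t) := by
        field_simp
      rw [e]
      apply mul_le_mul_of_nonneg_right hμle
      have := hAnn t; have := hBnn t; positivity
    calc ∑ t ∈ Finset.Icc 1 T, μ T * ((1/(4*ρ^2)) * A t + (1/(4*γ^2)) * B t)
        ≤ ∑ t ∈ Finset.Icc 1 T,
          (1/(ρ*γ)) * ((γ/(4*ρ)) * (μ t * A t) + (ρ/(4*γ)) * (μ t * B t)) :=
          Finset.sum_le_sum hper
      _ = (1/(ρ*γ)) * ((γ/(4*ρ)) * SA + (ρ/(4*γ)) * SB) := by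
          rw [← Finset.mul_sum, Finset.sum_add_distrib, ← Finset.mul_sum, ← Finset.mul_sum]
  have hMeq : (f x1 - fstar) + 2*σ^2/L + 2*m*σ^2/L * Real.log (m + T) = ρ * γ * k * M := by
    rw [hM]
    field_simp
  have hμTSk : μ T * S ≤ k * M := by
    have h1 : (1/(ρ*γ)) * ((γ/(4*ρ)) * SA + (ρ/(4*γ)) * SB)
        ≤ (1/(ρ*γ)) * (ρ * γ * k * M) := by
      apply mul_le_mul_of_nonneg_left _ (by positivity)
      rw [← hMeq]
      exact hmain
    have e : (1/(ρ*γ)) * (ρ * γ * k * M) = k * M := by field_simp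
    rw [e] at h1
    exact le_trans hμTS h1
  have hSb : S ≤ M * (m + T) ^ ((1:ℝ)/2) := by
    have hμT := hμ0 T
    rw [hμ] at hμTSk
    rw [div_mul_eq_mul_div, div_le_iff₀ (hst T)] at hμTSk
    have h2 : k * S ≤ k * (M * (m + T) ^ ((1:ℝ)/2)) := by
      calc k * S ≤ k * M * (m + T) ^ ((1:ℝ)/2) := hμTSk
        _ = k * (M * (m + T) ^ ((1:ℝ)/2)) := by ring
    exact le_of_mul_le_mul_left h2 hk
  calc (1 / (T : ℝ)) * ∑ t ∈ Finset.Icc 1 T,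
        ∫ ω, ((1 / (4 * ρ ^ 2)) * ‖gf (x t ω) - g t ω‖ ^ 2
          + (1 / (4 * γ ^ 2)) * ‖xtil t ω - x t ω‖ ^ 2) ∂P
      = (1 / (T : ℝ)) * S := by
        rw [hSdef, Finset.sum_congr rfl hsplit]
    _ ≤ (1 / (T : ℝ)) * (M * (m + T) ^ ((1:ℝ)/2)) := by
        apply mul_le_mul_of_nonneg_left hSb (by positivity)
    _ = M * (m + T) ^ ((1:ℝ)/2) / (T : ℝ) := by ring
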